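/- arXiv:2204.12207 — 2 statements merged into one kernel-verified Lean document; each statement's English description precedes it below -/
import Mathlib

section
/- Let d ≥ 3, let [[A, wᵗ],[v, c]] ∈ SO(d,ℝ) with c ≠ 0, z' := c^{-1}v, and let k̃ ∈ SO(d-1,ℝ). Then k̃·(A − wᵗz')·(A − wᵗz')ᵗ·k̃ᵗ = I_{d-1} + (k̃ wᵗ w k̃ᵗ)/c², and (A − wᵗz')ᵗ·(A − wᵗz') = I_{d-1} + (vᵗ v)/c². Moreover det(I_{d-1} + (k̃ wᵗ w k̃ᵗ)/c²) = c^{-2} = det(I_{d-1} + (vᵗ v)/c²). -/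
open Matrix

def colv {n : ℕ} (b : Fin n → ℝ) : Matrix (Fin n) Unit ℝ := Matrix.of fun i _ => b i

def rowv {n : ℕ} (v : Fin n → ℝ) : Matrix Unit (Fin n) ℝ := Matrix.of fun _ j => v j

def scal (c : ℝ) : Matrix Unit Unit ℝ := Matrix.of fun _ _ => c

lemma colv_transpose {n : ℕ} (w : Fin n → ℝ) : (colv w)ᵀ = rowv w := rfl
lemma rowv_transpose {n : ℕ} (v : Fin n → ℝ) : (rowv v)ᵀ = colv v := rfl
lemma scal_transpose (c : ℝ) : (scal c)ᵀ = scal c := rfl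

lemma rowv_mul_colv {n : ℕ} (v u : Fin n → ℝ) : rowv v * colv u = scal (v ⬝ᵥ u) := by
  ext i j; simp [mul_apply, rowv, colv, scal, dotProduct]

lemma scal_mul_scal (a b : ℝ) : scal a * scal b = scal (a * b) := by
  ext i j; simp [mul_apply, scal]

lemma one_eq_scal : (1 : Matrix Unit Unit ℝ) = scal 1 := by
  ext i j; simp [scal, Matrix.one_apply]

lemma scal_inj {a b : ℝ} (h : scal a = scal b) : a = b := congrFun (congrFun h ()) ()

lemma colv_mul_scal {n : ℕ} (w : Fin n → ℝ) (c : ℝ) : colv w * scal c = c • colv w := by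
  ext i j; simp [mul_apply, colv, scal, mul_comm]

lemma scal_mul_rowv {n : ℕ} (v : Fin n → ℝ) (c : ℝ) : scal c * rowv v = c • rowv v := by
  ext i j; simp [mul_apply, rowv, scal]

lemma rowv_smul {n : ℕ} (v : Fin n → ℝ) (c : ℝ) :
    rowv (fun j => c * v j) = c • rowv v := rfl

lemma colv_smul {n : ℕ} (v : Fin n → ℝ) (c : ℝ) :
    colv (fun j => c * v j) = c • colv v := rfl

lemma colv_scal_rowv {n m : ℕ} (u : Fin n → ℝ) (x : Fin m → ℝ) (a : ℝ) :
    colv u * (scal a * rowv x) = a • (colv u * rowv x) := by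
  rw [scal_mul_rowv, Matrix.mul_smul]

lemma one_add_smul_scal (s a : ℝ) :
    (1 : Matrix Unit Unit ℝ) + s • scal a = scal (1 + s * a) := by
  ext i j; simp [scal, Matrix.one_apply]

/-- Lemma on the symmetric factor: for `[[A, wᵗ],[v, c]] ∈ SO(d,ℝ)`, `c ≠ 0`, `z' = c⁻¹v`
and `k̃ ∈ SO(d-1,ℝ)`:
`k̃(A − wᵗz')(A − wᵗz')ᵗk̃ᵗ = I + k̃wᵗwk̃ᵗ/c²`, `(A − wᵗz')ᵗ(A − wᵗz') = I + vᵗv/c²`,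
and both matrices have determinant `c⁻²`. -/
theorem almost_rotation_symmetric_factor (d : ℕ) (hd : 3 ≤ d)
    (k : Matrix (Fin (d-1) ⊕ Unit) (Fin (d-1) ⊕ Unit) ℝ)
    (A : Matrix (Fin (d-1)) (Fin (d-1)) ℝ) (w v : Fin (d-1) → ℝ) (c : ℝ)
    (hblock : k = Matrix.fromBlocks A (colv w) (rowv v) (scal c))
    (horth : k * kᵀ = 1) (horth' : kᵀ * k = 1) (hdet : k.det = 1) (hc : c ≠ 0)
    (ktil : Matrix (Fin (d-1)) (Fin (d-1)) ℝ)
    (hktil : ktil * ktilᵀ = 1) (hktil' : ktilᵀ * ktil = 1) (hktildet : ktil.det = 1) :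
    (ktil * (A - colv w * rowv (fun j => c⁻¹ * v j)) *
        (A - colv w * rowv (fun j => c⁻¹ * v j))ᵀ * ktilᵀ =
      1 + (c ^ 2)⁻¹ • (ktil * (colv w * rowv w) * ktilᵀ)) ∧
    ((A - colv w * rowv (fun j => c⁻¹ * v j))ᵀ * (A - colv w * rowv (fun j => c⁻¹ * v j)) =
      1 + (c ^ 2)⁻¹ • (colv v * rowv v)) ∧
    ((1 + (c ^ 2)⁻¹ • (ktil * (colv w * rowv w) * ktilᵀ) :
        Matrix (Fin (d-1)) (Fin (d-1)) ℝ).det = (c ^ 2)⁻¹) ∧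
    ((1 + (c ^ 2)⁻¹ • (colv v * rowv v) : Matrix (Fin (d-1)) (Fin (d-1)) ℝ).det = (c ^ 2)⁻¹) := by
  rw [hblock, fromBlocks_transpose, fromBlocks_multiply, ← fromBlocks_one] at horth horth'
  have h1 : Matrix.toBlocks₁₁ (1 : Matrix (Fin (d-1) ⊕ Unit) (Fin (d-1) ⊕ Unit) ℝ) = 1 := by
    rw [← fromBlocks_one, Matrix.toBlocks_fromBlocks₁₁]
  have e11 : A * Aᵀ + colv w * rowv w = 1 := by
    have := congrArg Matrix.toBlocks₁₁ horth
    simpa [Matrix.toBlocks_fromBlocks₁₁, h1, colv_transpose] using this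
  have e12 : A * colv v + c • colv w = 0 := by
    have := congrArg Matrix.toBlocks₁₂ horth
    simpa [Matrix.toBlocks_fromBlocks₁₂, rowv_transpose, scal_transpose, colv_mul_scal, -fromBlocks_one]
      using this
  have e22 : v ⬝ᵥ v = 1 - c * c := by
    have h := congrArg Matrix.toBlocks₂₂ horth
    simp only [Matrix.toBlocks_fromBlocks₂₂, rowv_transpose, scal_transpose,
      rowv_mul_colv, scal_mul_scal, one_eq_scal] at h
    have : scal (v ⬝ᵥ v + c * c) = scal 1 := by
      rw [← h]; ext i j; simp [scal]
    have := scal_inj this; linarith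
  have f11 : Aᵀ * A + colv v * rowv v = 1 := by
    have := congrArg Matrix.toBlocks₁₁ horth'
    simpa [Matrix.toBlocks_fromBlocks₁₁, h1, rowv_transpose] using this
  have f12 : Aᵀ * colv w + c • colv v = 0 := by
    have := congrArg Matrix.toBlocks₁₂ horth'
    simpa [Matrix.toBlocks_fromBlocks₁₂, rowv_transpose, colv_mul_scal, -fromBlocks_one] using this
  have f22 : w ⬝ᵥ w = 1 - c * c := by
    have h := congrArg Matrix.toBlocks₂₂ horth'
    simp only [Matrix.toBlocks_fromBlocks₂₂, colv_transpose, scal_transpose,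
      rowv_mul_colv, scal_mul_scal, one_eq_scal] at h
    have : scal (w ⬝ᵥ w + c * c) = scal 1 := by
      rw [← h]; ext i j; simp [scal]
    have := scal_inj this; linarith
  -- basic consequences
  have hAv : A * colv v = (-c) • colv w := by
    have := eq_neg_of_add_eq_zero_left e12; simpa [neg_smul] using this
  have hAw : Aᵀ * colv w = (-c) • colv v := by
    have := eq_neg_of_add_eq_zero_left f12; simpa [neg_smul] using this
  have hvA : rowv v * Aᵀ = (-c) • rowv w := by
    have := congrArg Matrix.transpose hAv
    simpa [transpose_mul, rowv_transpose, colv_transpose, transpose_smul] using this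
  have hwA : rowv w * A = (-c) • rowv v := by
    have := congrArg Matrix.transpose hAw
    simpa [transpose_mul, rowv_transpose, colv_transpose, transpose_smul] using this
  have hAA : A * Aᵀ = 1 - colv w * rowv w := by linear_combination (norm := abel) e11
  have hAA' : Aᵀ * A = 1 - colv v * rowv v := by linear_combination (norm := abel) f11
  set z : Fin (d-1) → ℝ := fun j => c⁻¹ * v j with hz
  set Y : Matrix (Fin (d-1)) (Fin (d-1)) ℝ := colv w * rowv z with hY
  have hcz : colv z = c⁻¹ • colv v := colv_smul v c⁻¹
  have hrz : rowv z = c⁻¹ • rowv v := rowv_smul v c⁻¹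
  have hcc : c⁻¹ * (-c) = -1 := by field_simp
  set M : Matrix (Fin (d-1)) (Fin (d-1)) ℝ := colv w * rowv w with hM
  set N : Matrix (Fin (d-1)) (Fin (d-1)) ℝ := colv v * rowv v with hN
  have hYt : Yᵀ = colv z * rowv w := by
    rw [hY, transpose_mul, rowv_transpose, colv_transpose]
  have hAY : A * Yᵀ = -M := by
    rw [hYt, hcz, ← Matrix.mul_assoc, Matrix.mul_smul, hAv, smul_smul, hcc, hM]
    simp
  have hYA : Y * Aᵀ = -M := by
    have := congrArg Matrix.transpose hAY
    simpa [transpose_mul, transpose_neg, hM, transpose_smul, colv_transpose,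
      rowv_transpose] using this
  have hzz : z ⬝ᵥ z = (c ^ 2)⁻¹ * (1 - c * c) := by
    have hzv : z = c⁻¹ • v := rfl
    rw [hzv, smul_dotProduct, dotProduct_smul, e22, smul_eq_mul, smul_eq_mul, pow_two, mul_inv]
    ring
  have hYY : Y * Yᵀ = ((c ^ 2)⁻¹ * (1 - c * c)) • M := by
    rw [hY, hYt, Matrix.mul_assoc, ← Matrix.mul_assoc (rowv z), rowv_mul_colv, hzz,
      colv_scal_rowv, ← hM]
  have hYtA : Yᵀ * A = -N := by
    rw [hYt, Matrix.mul_assoc, hwA, hcz, Matrix.mul_smul, Matrix.smul_mul, smul_smul]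
    rw [show (-c * c⁻¹ : ℝ) = -1 by field_simp, neg_one_smul, ← hN]
  have hAtY : Aᵀ * Y = -N := by
    have := congrArg Matrix.transpose hYtA
    simpa [transpose_mul, transpose_neg, hN, colv_transpose, rowv_transpose, hYt] using this
  have hYtY : Yᵀ * Y = ((c ^ 2)⁻¹ * (1 - c * c)) • N := by
    rw [hYt, hY, Matrix.mul_assoc, ← Matrix.mul_assoc (rowv w), rowv_mul_colv, f22,
      colv_scal_rowv, hcz, hrz, Matrix.smul_mul, Matrix.mul_smul, smul_smul, smul_smul, ← hN]
    congr 1; rw [pow_two, mul_inv]; ring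
  -- key identities
  have key1 : (A - Y) * (A - Y)ᵀ = 1 + (c ^ 2)⁻¹ • M := by
    rw [transpose_sub, Matrix.sub_mul, Matrix.mul_sub, Matrix.mul_sub, hAA, hAY, hYA, hYY]
    have hs : (c ^ 2)⁻¹ * (1 - c * c) = (c ^ 2)⁻¹ - 1 := by field_simp
    rw [hs]; module
  have key2 : (A - Y)ᵀ * (A - Y) = 1 + (c ^ 2)⁻¹ • N := by
    rw [transpose_sub, Matrix.sub_mul, Matrix.mul_sub, Matrix.mul_sub, hAA', hAtY, hYtA, hYtY]
    have hs : (c ^ 2)⁻¹ * (1 - c * c) = (c ^ 2)⁻¹ - 1 := by field_simp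
    rw [hs]; module
  refine ⟨?_, ?_, ?_, ?_⟩
  · rw [Matrix.mul_assoc ktil, key1, Matrix.mul_add, Matrix.add_mul, Matrix.mul_one, hktil,
      Matrix.mul_smul, Matrix.smul_mul]
  · exact key2
  · rw [show (c ^ 2)⁻¹ • (ktil * M * ktilᵀ) = (ktil * colv w) * ((c ^ 2)⁻¹ • (rowv w * ktilᵀ))
        by rw [Matrix.mul_smul]; congr 1; simp [hM, Matrix.mul_assoc],
      det_one_add_mul_comm]
    have : (c ^ 2)⁻¹ • (rowv w * ktilᵀ) * (ktil * colv w)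
        = (c ^ 2)⁻¹ • scal (w ⬝ᵥ w) := by
      rw [Matrix.smul_mul, Matrix.mul_assoc, ← Matrix.mul_assoc ktilᵀ, hktil',
        Matrix.one_mul, rowv_mul_colv]
    rw [this, f22, one_add_smul_scal, Matrix.det_unique]
    show 1 + (c ^ 2)⁻¹ * (1 - c * c) = (c ^ 2)⁻¹
    field_simp; ring
  · rw [show (c ^ 2)⁻¹ • N = colv v * ((c ^ 2)⁻¹ • rowv v) by rw [Matrix.mul_smul, ← hN],
      det_one_add_mul_comm, Matrix.smul_mul, rowv_mul_colv, e22, one_add_smul_scal,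
      Matrix.det_unique]
    show 1 + (c ^ 2)⁻¹ * (1 - c * c) = (c ^ 2)⁻¹
    field_simp; ring
end

section
/- Let d ≥ 2 and let [[A, wᵗ],[v, c]] ∈ SO(d,ℝ) with c ≠ 0, z' := c^{-1}v. Then for every s ∈ ℝ the matrix identity Φ^{-s}·[[A, wᵗ],[v, c]]·n₊(−z') = [[c^{1/(d-1)}(A − wᵗz'), c^{-1}e^{ds}wᵗ],[0, 1]]·Φ^{-s + (log c)/(d-1)} holds, where Φ^{-s} = diag(e^{s}I_{d-1}, e^{-(d-1)s}) and n₊(x) = [[I_{d-1}, 0],[x, 1]]. (In particular the first factor on the right lies in the group H of block matrices [[B, bᵗ],[0,1]] with det B = 1, by det(A − wᵗz') = c^{-1}.) -/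
open Matrix

noncomputable def Phi (d : ℕ) (t : ℝ) : Matrix (Fin (d-1) ⊕ Unit) (Fin (d-1) ⊕ Unit) ℝ :=
  Matrix.fromBlocks (Real.exp (-t) • (1 : Matrix (Fin (d-1)) (Fin (d-1)) ℝ)) 0 0
    (Matrix.of fun _ _ => Real.exp (((d : ℝ) - 1) * t))

noncomputable def nPlus (d : ℕ) (x : Fin (d-1) → ℝ) :
    Matrix (Fin (d-1) ⊕ Unit) (Fin (d-1) ⊕ Unit) ℝ :=
  Matrix.fromBlocks 1 0 (rowv x) 1

/-- For `k = [[A, wᵗ],[v, c]] ∈ SO(d,ℝ)` with `c > 0` and `z' = c⁻¹v`: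
`Φ^{-s} k n₊(−z') = [[c^{1/(d-1)}(A − wᵗz'), c⁻¹e^{ds}wᵗ],[0,1]] · Φ^{-s + (log c)/(d-1)}`. -/
theorem spherical_to_horospherical_coordinates (d : ℕ) (hd : 2 ≤ d)
    (k : Matrix (Fin (d-1) ⊕ Unit) (Fin (d-1) ⊕ Unit) ℝ)
    (A : Matrix (Fin (d-1)) (Fin (d-1)) ℝ) (w v : Fin (d-1) → ℝ) (c : ℝ)
    (hblock : k = Matrix.fromBlocks A (colv w) (rowv v) (scal c))
    (horth : k * kᵀ = 1) (horth' : kᵀ * k = 1) (hdet : k.det = 1) (hc : 0 < c)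
    (s : ℝ) :
    Phi d (-s) * k * nPlus d (fun i => -(c⁻¹ * v i)) =
      Matrix.fromBlocks
        ((c ^ ((1 : ℝ) / ((d : ℝ) - 1))) • (A - colv w * rowv (fun j => c⁻¹ * v j)))
        ((c⁻¹ * Real.exp ((d : ℝ) * s)) • colv w) 0 1 *
      Phi d (-s + Real.log c / ((d : ℝ) - 1)) := by
  have hne : ((d : ℝ) - 1) ≠ 0 := by
    have : (2:ℝ) ≤ (d:ℝ) := by exact_mod_cast hd
    linarith
  have hcne : c ≠ 0 := ne_of_gt hc
  have harg : ((d : ℝ) - 1) * (-s + Real.log c / ((d : ℝ) - 1))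
      = -(((d : ℝ) - 1) * s) + Real.log c := by field_simp
  subst hblock
  unfold Phi nPlus colv rowv scal
  ext i j
  rcases i with i | i <;> rcases j with j | j <;>
    simp [Matrix.fromBlocks_multiply, Matrix.mul_apply, Matrix.one_apply,
      Real.rpow_def_of_pos hc, harg, Real.exp_add, Real.exp_log hc,
      Finset.mul_sum, Finset.sum_mul, mul_comm, mul_assoc, mul_left_comm,
      ← Real.exp_add]
  · rw [show ((d:ℝ)-1)⁻¹ * Real.log c + (-(Real.log c/((d:ℝ)-1)) + s) = s by
      rw [div_eq_mul_inv]; ring]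
    ring
  · left
    rw [show s * (d:ℝ) + (-(s * ((d:ℝ)-1)) + Real.log c) = s + Real.log c by ring,
      Real.exp_add, Real.exp_log hc]
    field_simp
  · field_simp; ring
  · rw [Real.exp_add, Real.exp_log hc]; ring
end
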